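/- Let X be a real normed space and fix real numbers η, β with 1 < η < β and a constant C > 0. Let N, B : X → ℝ be positively homogeneous of degrees η and β respectively (N(su) = s^η N(u) and B(su) = s^β B(u) for all s > 0, u ∈ X) and satisfy C⁻¹‖u‖^η ≤ N(u) ≤ C‖u‖^η and |B(u)| ≤ C‖u‖^β for all u ∈ X. Assume: every bounded sequence in X has a subsequence converging in the weak topology of X; N is sequentially weakly lower semicontinuous; B is sequentially weakly continuous; and there exists u ∈ X with B(u) > 0. Let m = inf{c₀(u) : B(u) > 0} and M = {w ∈ X : ‖w‖ = 1, B(w) > 0, c₀(w) = m}. Then M is nonempty, and every sequence (u_n) ⊂ M has a subsequence converging weakly to some u ∈ X satisfying u ≠ 0, B(u) > 0 and c₀(u) = m (so that u/‖u‖ ∈ M). -/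

import Mathlib

open Filter Topology

/-- A sequence converges weakly (in the weak topology of `X`) iff every continuous
linear functional of it converges. -/
def WeaklyConvergesTo {X : Type*} [NormedAddCommGroup X] [NormedSpace ℝ X]
    (u : ℕ → X) (l : X) : Prop :=
  ∀ f : X →L[ℝ] ℝ, Tendsto (fun n => f (u n)) atTop (𝓝 (f l))

/-- Under the assumptions of Statement 15, with
`m = inf{c₀(u) : B(u) > 0}` and `M = {w : ‖w‖ = 1, B(w) > 0, c₀(w) = m}`,
the set `M` is nonempty and every sequence in `M` has a subsequence converging
weakly to some `u ≠ 0` with `B(u) > 0` and `c₀(u) = m`. -/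
theorem stmt16 {X : Type*} [NormedAddCommGroup X] [NormedSpace ℝ X]
    (η β C : ℝ) (h2 : 1 < η) (h3 : η < β) (hC : 0 < C)
    (N B : X → ℝ)
    (hNh : ∀ s : ℝ, 0 < s → ∀ u : X, N (s • u) = s ^ η * N u)
    (hBh : ∀ s : ℝ, 0 < s → ∀ u : X, B (s • u) = s ^ β * B u)
    (hNlow : ∀ u : X, C⁻¹ * ‖u‖ ^ η ≤ N u) (hNup : ∀ u : X, N u ≤ C * ‖u‖ ^ η)
    (hBgr : ∀ u : X, |B u| ≤ C * ‖u‖ ^ β)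
    (hrefl : ∀ u : ℕ → X, (∃ R : ℝ, ∀ n, ‖u n‖ ≤ R) →
      ∃ φ : ℕ → ℕ, StrictMono φ ∧ ∃ l : X, WeaklyConvergesTo (u ∘ φ) l)
    (hNwlsc : ∀ (u : ℕ → X) (l : X), WeaklyConvergesTo u l →
      N l ≤ liminf (fun n => N (u n)) atTop)
    (hBwc : ∀ (u : ℕ → X) (l : X), WeaklyConvergesTo u l →
      Tendsto (fun n => B (u n)) atTop (𝓝 (B l)))
    (hex : ∃ u : X, 0 < B u)
    (m : ℝ)
    (hm : m = sInf {x : ℝ | ∃ u : X, 0 < B u ∧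
      x = (β - η) / (η * β) * ((N u) ^ (β / (β - η)) / (B u) ^ (η / (β - η)))})
    (M : Set X)
    (hM : M = {w : X | ‖w‖ = 1 ∧ 0 < B w ∧
      (β - η) / (η * β) * ((N w) ^ (β / (β - η)) / (B w) ^ (η / (β - η))) = m}) :
    M.Nonempty ∧
    ∀ u : ℕ → X, (∀ n, u n ∈ M) →
      ∃ φ : ℕ → ℕ, StrictMono φ ∧ ∃ l : X, WeaklyConvergesTo (u ∘ φ) l ∧
        l ≠ 0 ∧ 0 < B l ∧
        (β - η) / (η * β) * ((N l) ^ (β / (β - η)) / (B l) ^ (η / (β - η))) = m := by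
  set K : ℝ := (β - η) / (η * β) with hKdef
  set p : ℝ := β / (β - η) with hpdef
  set q : ℝ := η / (β - η) with hqdef
  set c₀ : X → ℝ := fun u => K * (N u ^ p / B u ^ q) with hc₀
  set S : Set ℝ := {x : ℝ | ∃ u : X, 0 < B u ∧ x = c₀ u} with hS
  -- basic positivity facts
  have hη0 : (0:ℝ) < η := lt_trans one_pos h2
  have hβ0 : (0:ℝ) < β := lt_trans hη0 h3
  have hβη : (0:ℝ) < β - η := sub_pos.mpr h3
  have hK : 0 < K := div_pos hβη (mul_pos hη0 hβ0)
  have hp : 0 < p := div_pos hβ0 hβη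
  have hq : 0 < q := div_pos hη0 hβη
  have hpq : η * p = β * q := by
    rw [hpdef, hqdef]; field_simp
  have hN0 : ∀ u : X, 0 ≤ N u := fun u =>
    le_trans (by positivity) (hNlow u)
  have hB00 : B 0 = 0 := by
    have h := hBgr 0
    simp only [norm_zero, Real.zero_rpow hβ0.ne'] at h
    have : |B (0:X)| ≤ 0 := by linarith
    exact abs_eq_zero.mp (le_antisymm this (abs_nonneg _))
  have hne : ∀ u : X, 0 < B u → u ≠ 0 := by
    intro u hu h0; rw [h0, hB00] at hu; exact lt_irrefl 0 hu
  -- scale invariance of c₀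
  have scaleInv : ∀ s : ℝ, 0 < s → ∀ u : X, 0 < B u → c₀ (s • u) = c₀ u := by
    intro s hs u hBu
    have hNs : N (s • u) ^ p = s ^ (η * p) * N u ^ p := by
      rw [hNh s hs u, Real.mul_rpow (Real.rpow_nonneg hs.le η) (hN0 u),
        ← Real.rpow_mul hs.le]
    have hBs : B (s • u) ^ q = s ^ (β * q) * B u ^ q := by
      rw [hBh s hs u, Real.mul_rpow (Real.rpow_nonneg hs.le β) hBu.le,
        ← Real.rpow_mul hs.le]
    have hspos : (0:ℝ) < s ^ (β * q) := Real.rpow_pos_of_pos hs _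
    rw [hc₀]
    simp only
    rw [hNs, hBs, hpq, mul_div_mul_left _ _ hspos.ne']
  -- lower bound for c₀ on {B > 0}
  set m₀ : ℝ := K * ((C⁻¹) ^ p / C ^ q) with hm₀
  have hm₀pos : 0 < m₀ :=
    mul_pos hK (div_pos (Real.rpow_pos_of_pos (inv_pos.mpr hC) p)
      (Real.rpow_pos_of_pos hC q))
  have lowb : ∀ u : X, 0 < B u → m₀ ≤ c₀ u := by
    intro u hBu
    have hu0 : u ≠ 0 := hne u hBu
    have hr : (0:ℝ) < ‖u‖ := norm_pos_iff.mpr hu0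
    have hT : (0:ℝ) < ‖u‖ ^ (β * q) := Real.rpow_pos_of_pos hr _
    have hA : (C⁻¹) ^ p * ‖u‖ ^ (β * q) ≤ N u ^ p := by
      have h1 : C⁻¹ * ‖u‖ ^ η ≤ N u := hNlow u
      have h2' : (C⁻¹ * ‖u‖ ^ η) ^ p ≤ N u ^ p :=
        Real.rpow_le_rpow (by positivity) h1 hp.le
      calc (C⁻¹) ^ p * ‖u‖ ^ (β * q)
          = (C⁻¹ * ‖u‖ ^ η) ^ p := by
            rw [Real.mul_rpow (by positivity) (by positivity),
              ← Real.rpow_mul hr.le, hpq]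
        _ ≤ N u ^ p := h2'
    have hD : B u ^ q ≤ C ^ q * ‖u‖ ^ (β * q) := by
      have h1 : B u ≤ C * ‖u‖ ^ β := le_trans (le_abs_self _) (hBgr u)
      have h2' : B u ^ q ≤ (C * ‖u‖ ^ β) ^ q :=
        Real.rpow_le_rpow hBu.le h1 hq.le
      calc B u ^ q ≤ (C * ‖u‖ ^ β) ^ q := h2'
        _ = C ^ q * ‖u‖ ^ (β * q) := by
            rw [Real.mul_rpow hC.le (by positivity), ← Real.rpow_mul hr.le]
    have hBq : (0:ℝ) < B u ^ q := Real.rpow_pos_of_pos hBu _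
    have key : (C⁻¹) ^ p / C ^ q ≤ N u ^ p / B u ^ q := by
      have := div_le_div₀ (Real.rpow_nonneg (hN0 u) p) hA hBq hD
      calc (C⁻¹) ^ p / C ^ q
          = (C⁻¹) ^ p * ‖u‖ ^ (β * q) / (C ^ q * ‖u‖ ^ (β * q)) := by
            rw [mul_div_mul_right _ _ hT.ne']
        _ ≤ N u ^ p / B u ^ q := this
    rw [hm₀]
    exact mul_le_mul_of_nonneg_left key hK.le
  -- facts about m
  obtain ⟨u₀, hu₀⟩ := hex
  have hSne : S.Nonempty := ⟨c₀ u₀, u₀, hu₀, rfl⟩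
  have hSbdd : BddBelow S := ⟨m₀, by rintro x ⟨u, hBu, rfl⟩; exact lowb u hBu⟩
  have hmS : m = sInf S := hm
  have hmle : ∀ u : X, 0 < B u → m ≤ c₀ u := by
    intro u hBu; rw [hmS]; exact csInf_le hSbdd ⟨u, hBu, rfl⟩
  have hm₀m : m₀ ≤ m := by rw [hmS]; exact le_csInf hSne (by rintro x ⟨u, hBu, rfl⟩; exact lowb u hBu)
  have hmpos : 0 < m := lt_of_lt_of_le hm₀pos hm₀m
  -- key extraction lemma
  have key : ∀ w : ℕ → X, (∀ n, ‖w n‖ = 1) → (∀ n, 0 < B (w n)) →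
      Tendsto (fun n => c₀ (w n)) atTop (𝓝 m) →
      ∃ φ : ℕ → ℕ, StrictMono φ ∧ ∃ l : X, WeaklyConvergesTo (w ∘ φ) l ∧
        l ≠ 0 ∧ 0 < B l ∧ c₀ l = m := by
    intro w hw1 hwB hwc
    obtain ⟨φ, hφ, l, hl⟩ := hrefl w ⟨1, fun n => (hw1 n).le⟩
    refine ⟨φ, hφ, l, hl, ?_⟩
    have hc' : Tendsto (fun n => c₀ (w (φ n))) atTop (𝓝 m) :=
      hwc.comp hφ.tendsto_atTop
    have hB' : Tendsto (fun n => B (w (φ n))) atTop (𝓝 (B l)) := hBwc _ _ hl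
    have hBl0 : 0 ≤ B l := ge_of_tendsto' hB' (fun n => (hwB (φ n)).le)
    -- formula for N in terms of c₀ and B
    have hNeq : ∀ n, N (w n) = (c₀ (w n) * B (w n) ^ q / K) ^ p⁻¹ := by
      intro n
      have hBq : (0:ℝ) < B (w n) ^ q := Real.rpow_pos_of_pos (hwB n) _
      have : c₀ (w n) * B (w n) ^ q / K = N (w n) ^ p := by
        rw [hc₀]; field_simp
      rw [this, Real.rpow_rpow_inv (hN0 _) hp.ne']
    set A : ℝ := (m * B l ^ q / K) ^ p⁻¹ with hA
    have hNt : Tendsto (fun n => N (w (φ n))) atTop (𝓝 A) := by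
      have h1 : Tendsto (fun n => B (w (φ n)) ^ q) atTop (𝓝 (B l ^ q)) :=
        hB'.rpow_const (Or.inr hq.le)
      have h2 : Tendsto (fun n => c₀ (w (φ n)) * B (w (φ n)) ^ q / K) atTop
          (𝓝 (m * B l ^ q / K)) := (hc'.mul h1).div_const K
      have h3 := h2.rpow_const (Or.inr (inv_nonneg.mpr hp.le))
      exact h3.congr (fun n => (hNeq (φ n)).symm)
    have hCinvA : C⁻¹ ≤ A := by
      refine ge_of_tendsto' hNt (fun n => ?_)
      have := hNlow (w (φ n))
      rwa [hw1 (φ n), Real.one_rpow, mul_one] at this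
    have hBlpos : 0 < B l := by
      rcases lt_or_eq_of_le hBl0 with h | h
      · exact h
      · exfalso
        have : A = 0 := by
          rw [hA, ← h, Real.zero_rpow hq.ne', mul_zero, zero_div,
            Real.zero_rpow (inv_ne_zero hp.ne')]
        rw [this] at hCinvA
        exact absurd hCinvA (not_le.mpr (inv_pos.mpr hC))
    have hlne : l ≠ 0 := hne l hBlpos
    refine ⟨hlne, hBlpos, ?_⟩
    -- N l ≤ A
    have hliminf : liminf (fun n => N ((w ∘ φ) n)) atTop = A := hNt.liminf_eq
    have hNlA : N l ≤ A := by
      have := hNwlsc (w ∘ φ) l hl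
      rwa [hliminf] at this
    have hbase : (0:ℝ) ≤ m * B l ^ q / K := by
      have := Real.rpow_pos_of_pos hBlpos q
      positivity
    have hNp : N l ^ p ≤ m * B l ^ q / K := by
      calc N l ^ p ≤ A ^ p := Real.rpow_le_rpow (hN0 l) hNlA hp.le
        _ = m * B l ^ q / K := Real.rpow_inv_rpow hbase hp.ne'
    have hBq : (0:ℝ) < B l ^ q := Real.rpow_pos_of_pos hBlpos _
    have hle : c₀ l ≤ m := by
      have h1 : N l ^ p / B l ^ q ≤ (m * B l ^ q / K) / B l ^ q := by
        gcongr
      have h2 : K * (N l ^ p / B l ^ q) ≤ K * ((m * B l ^ q / K) / B l ^ q) :=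
        mul_le_mul_of_nonneg_left h1 hK.le
      have h3 : K * ((m * B l ^ q / K) / B l ^ q) = m := by
        field_simp
      rw [hc₀]; calc K * (N l ^ p / B l ^ q) ≤ _ := h2
        _ = m := h3
    exact le_antisymm hle (hmle l hBlpos)
  constructor
  · -- M is nonempty: minimizing sequence
    have hseq : ∀ n : ℕ, ∃ u : X, 0 < B u ∧ c₀ u < m + 1 / (n + 1) := by
      intro n
      have hlt : sInf S < m + 1 / (n + 1) := by
        rw [← hmS]
        have : (0:ℝ) < 1 / ((n:ℝ) + 1) := by positivity
        linarith
      obtain ⟨x, ⟨u, hBu, rfl⟩, hx⟩ := exists_lt_of_csInf_lt hSne hlt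
      exact ⟨u, hBu, hx⟩
    choose v hv1 hv2 using hseq
    set w : ℕ → X := fun n => ‖v n‖⁻¹ • v n with hw
    have hvne : ∀ n, v n ≠ 0 := fun n => hne _ (hv1 n)
    have hvnorm : ∀ n, (0:ℝ) < ‖v n‖ := fun n => norm_pos_iff.mpr (hvne n)
    have hw1 : ∀ n, ‖w n‖ = 1 := by
      intro n
      rw [hw]; simp only [norm_smul, norm_inv, norm_norm]
      exact inv_mul_cancel₀ (hvnorm n).ne'
    have hwB : ∀ n, 0 < B (w n) := by
      intro n
      rw [hw]; simp only
      rw [hBh _ (inv_pos.mpr (hvnorm n)) (v n)]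
      exact mul_pos (Real.rpow_pos_of_pos (inv_pos.mpr (hvnorm n)) _) (hv1 n)
    have hwc0 : ∀ n, c₀ (w n) = c₀ (v n) := fun n =>
      scaleInv _ (inv_pos.mpr (hvnorm n)) (v n) (hv1 n)
    have hwc : Tendsto (fun n => c₀ (w n)) atTop (𝓝 m) := by
      have hup : Tendsto (fun n : ℕ => m + 1 / ((n:ℝ) + 1)) atTop (𝓝 m) := by
        have h0 := (tendsto_const_nhds : Tendsto (fun _ : ℕ => m) atTop (𝓝 m)).add
          tendsto_one_div_add_atTop_nhds_zero_nat
        simpa using h0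
      refine tendsto_of_tendsto_of_tendsto_of_le_of_le
        (tendsto_const_nhds) hup (fun n => ?_) (fun n => ?_)
      · rw [hwc0]; exact hmle _ (hv1 n)
      · rw [hwc0]; exact (hv2 n).le
    obtain ⟨φ, hφ, l, hl, hlne, hBl, hcl⟩ := key w hw1 hwB hwc
    have hlnorm : (0:ℝ) < ‖l‖ := norm_pos_iff.mpr hlne
    refine ⟨‖l‖⁻¹ • l, ?_⟩
    rw [hM]
    refine ⟨?_, ?_, ?_⟩
    · simp only [norm_smul, norm_inv, norm_norm]
      exact inv_mul_cancel₀ hlnorm.ne'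
    · rw [hBh _ (inv_pos.mpr hlnorm) l]
      exact mul_pos (Real.rpow_pos_of_pos (inv_pos.mpr hlnorm) _) hBl
    · have h := scaleInv _ (inv_pos.mpr hlnorm) l hBl
      exact h.trans hcl
  · -- every sequence in M has the desired subsequence
    intro u hu
    have hu' : ∀ n, ‖u n‖ = 1 ∧ 0 < B (u n) ∧ c₀ (u n) = m := by
      intro n; have := hu n; rw [hM] at this; exact this
    have hwc : Tendsto (fun n => c₀ (u n)) atTop (𝓝 m) := by
      have : (fun n => c₀ (u n)) = fun _ => m := funext fun n => (hu' n).2.2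
      rw [this]; exact tendsto_const_nhds
    obtain ⟨φ, hφ, l, hl, hlne, hBl, hcl⟩ :=
      key u (fun n => (hu' n).1) (fun n => (hu' n).2.1) hwc
    exact ⟨φ, hφ, l, hl, hlne, hBl, hcl⟩
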